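/- arXiv:2205.10846 — 4 statements merged into one kernel-verified Lean document; each statement's English description precedes it below -/
import Mathlib

section
/- Let V be a seminormed abelian group and T : V → V a norm non-increasing homomorphism. For z, z' ∈ V with ‖T^m(z) − T^m(z')‖ ≤ C for all m (for some constant C ≥ 0), the limits lim_{m→∞} ‖T^m(z) − z‖/m and lim_{m→∞} ‖T^m(z') − z'‖/m are equal. -/
open Filter Topology

lemma iterate_sub_norm_le {V : Type*} [SeminormedAddCommGroup V]
    (T : V →+ V) (hT : ∀ v, ‖T v‖ ≤ ‖v‖) (v : V) : ∀ n, ‖(⇑T)^[n] v‖ ≤ ‖v‖ := by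
  intro n
  induction n with
  | zero => simp
  | succ n ih =>
      rw [Function.iterate_succ_apply']
      exact (hT _).trans ih

lemma subadd_aux {V : Type*} [SeminormedAddCommGroup V]
    (T : V →+ V) (hT : ∀ v, ‖T v‖ ≤ ‖v‖) (z : V) :
    Subadditive (fun m : ℕ => ‖(⇑T)^[m] z - z‖) := by
  intro m n
  have key : (⇑T)^[m + n] z - z = (⇑T)^[n] ((⇑T)^[m] z - z) + ((⇑T)^[n] z - z) := by
    have : (⇑T)^[n] ((⇑T)^[m] z - z) = (⇑T)^[n] ((⇑T)^[m] z) - (⇑T)^[n] z := by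
      have : ∀ a b : V, (⇑T)^[n] (a - b) = (⇑T)^[n] a - (⇑T)^[n] b := by
        intro a b
        induction n with
        | zero => simp
        | succ k ih => simp [Function.iterate_succ_apply', ih, map_sub]
      exact this _ _
    rw [this, ← Function.iterate_add_apply, Nat.add_comm n m]
    abel
  calc ‖(⇑T)^[m + n] z - z‖ = ‖(⇑T)^[n] ((⇑T)^[m] z - z) + ((⇑T)^[n] z - z)‖ := by rw [key]
    _ ≤ ‖(⇑T)^[n] ((⇑T)^[m] z - z)‖ + ‖(⇑T)^[n] z - z‖ := norm_add_le _ _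
    _ ≤ ‖(⇑T)^[m] z - z‖ + ‖(⇑T)^[n] z - z‖ := by
        gcongr; exact iterate_sub_norm_le T hT _ n

/-- If `T` is norm non-increasing and `‖T^m z - T^m z'‖ ≤ C` for all `m`, then the limits
`lim ‖T^m z - z‖ / m` and `lim ‖T^m z' - z'‖ / m` exist and are equal. -/
theorem limit_independent_of_basepoint {V : Type*} [SeminormedAddCommGroup V]
    (T : V →+ V) (hT : ∀ v, ‖T v‖ ≤ ‖v‖) (z z' : V) (C : ℝ) (hC : 0 ≤ C)
    (hbd : ∀ m : ℕ, ‖(⇑T)^[m] z - (⇑T)^[m] z'‖ ≤ C) :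
    ∃ L : ℝ, Tendsto (fun m : ℕ => ‖(⇑T)^[m] z - z‖ / m) atTop (𝓝 L) ∧
      Tendsto (fun m : ℕ => ‖(⇑T)^[m] z' - z'‖ / m) atTop (𝓝 L) := by
  have h1 := subadd_aux T hT z
  have h2 := subadd_aux T hT z'
  have bdd1 : BddBelow (Set.range fun n : ℕ => ‖(⇑T)^[n] z - z‖ / n) := by
    refine ⟨0, ?_⟩
    rintro x ⟨n, rfl⟩
    positivity
  have bdd2 : BddBelow (Set.range fun n : ℕ => ‖(⇑T)^[n] z' - z'‖ / n) := by
    refine ⟨0, ?_⟩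
    rintro x ⟨n, rfl⟩
    positivity
  have t1 := h1.tendsto_lim bdd1
  have t2 := h2.tendsto_lim bdd2
  -- show the two lims are equal
  have hdiff : Tendsto (fun m : ℕ =>
      ‖(⇑T)^[m] z - z‖ / m - ‖(⇑T)^[m] z' - z'‖ / m) atTop (𝓝 0) := by
    have hsq : Tendsto (fun m : ℕ => (C + ‖z - z'‖) / m) atTop (𝓝 0) :=
      Tendsto.div_atTop tendsto_const_nhds tendsto_natCast_atTop_atTop
    have hsq' : Tendsto (fun m : ℕ => -((C + ‖z - z'‖) / m)) atTop (𝓝 0) := by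
      simpa using hsq.neg
    refine squeeze_zero_norm (fun m => ?_) hsq
    have hm : |‖(⇑T)^[m] z - z‖ - ‖(⇑T)^[m] z' - z'‖| ≤ C + ‖z - z'‖ := by
      refine (abs_norm_sub_norm_le _ _).trans ?_
      have : (⇑T)^[m] z - z - ((⇑T)^[m] z' - z') =
          ((⇑T)^[m] z - (⇑T)^[m] z') - (z - z') := by abel
      rw [this]
      exact (norm_sub_le _ _).trans (add_le_add (hbd m) le_rfl)
    rcases Nat.eq_zero_or_pos m with rfl | hm0
    · simp
    · have hmpos : (0 : ℝ) < m := by exact_mod_cast hm0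
      rw [div_sub_div_same, Real.norm_eq_abs, abs_div, abs_of_pos hmpos,
        div_le_div_iff_of_pos_right hmpos]
      exact hm
  have heq : h1.lim = h2.lim := by
    have := t1.sub t2
    have h0 : Tendsto (fun m : ℕ =>
        ‖(⇑T)^[m] z - z‖ / m - ‖(⇑T)^[m] z' - z'‖ / m) atTop (𝓝 (h1.lim - h2.lim)) := this
    have := tendsto_nhds_unique h0 hdiff
    linarith
  exact ⟨h1.lim, t1, heq ▸ t2⟩
end

section
/- Let V be a seminormed abelian group, T, S : V → V norm non-increasing homomorphisms, and z ∈ V. If there is a constant C ≥ 0 with ‖T^m(z) − S^m(z)‖ ≤ C for every m ∈ ℕ, then lim_{m→∞} ‖T^m(z) − z‖/m = lim_{m→∞} ‖S^m(z) − z‖/m. -/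
open Filter Topology

/-- If `T, S` are norm non-increasing and `‖T^m z - S^m z‖ ≤ C` for all `m`, then
`lim ‖T^m z - z‖ / m = lim ‖S^m z - z‖ / m`. -/
theorem limit_independent_of_homotopic_map {V : Type*} [SeminormedAddCommGroup V]
    (T S : V →+ V) (hT : ∀ v, ‖T v‖ ≤ ‖v‖) (hS : ∀ v, ‖S v‖ ≤ ‖v‖) (z : V)
    (C : ℝ) (hC : 0 ≤ C) (hbd : ∀ m : ℕ, ‖(⇑T)^[m] z - (⇑S)^[m] z‖ ≤ C) :
    ∃ L : ℝ, Tendsto (fun m : ℕ => ‖(⇑T)^[m] z - z‖ / m) atTop (𝓝 L) ∧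
      Tendsto (fun m : ℕ => ‖(⇑S)^[m] z - z‖ / m) atTop (𝓝 L) := by
  set a : ℕ → ℝ := fun m => ‖(⇑T)^[m] z - z‖ with ha
  have hTiter : ∀ (n : ℕ) (v : V), ‖(⇑T)^[n] v‖ ≤ ‖v‖ := by
    intro n
    induction n with
    | zero => intro v; simp
    | succ n ih =>
      intro v
      rw [Function.iterate_succ_apply]
      exact (ih (T v)).trans (hT v)
  have hiter : ∀ (n : ℕ) (x y : V), (⇑T)^[n] (x - y) = (⇑T)^[n] x - (⇑T)^[n] y := by
    intro n
    induction n with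
    | zero => intro x y; simp
    | succ n ih =>
      intro x y
      simp [Function.iterate_succ_apply, map_sub, ih]
  have hsub : Subadditive a := by
    intro m n
    have : (⇑T)^[m + n] z - z = ((⇑T)^[n] ((⇑T)^[m] z - z)) + ((⇑T)^[n] z - z) := by
      rw [hiter n]
      rw [add_comm m n, Function.iterate_add_apply]
      abel
    calc a (m + n) = ‖(⇑T)^[m + n] z - z‖ := rfl
      _ ≤ ‖(⇑T)^[n] ((⇑T)^[m] z - z)‖ + ‖(⇑T)^[n] z - z‖ := by rw [this]; exact norm_add_le _ _
      _ ≤ a m + a n := add_le_add (hTiter n _) le_rfl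
  have hbdd : BddBelow (Set.range fun n : ℕ => a n / n) := by
    refine ⟨0, fun x ⟨n, hn⟩ => ?_⟩
    simp only [← hn]
    positivity
  refine ⟨hsub.lim, hsub.tendsto_lim hbdd, ?_⟩
  have key : Tendsto (fun m : ℕ => ‖(⇑S)^[m] z - z‖ / m - a m / m) atTop (𝓝 0) := by
    have hb : ∀ m : ℕ, |‖(⇑S)^[m] z - z‖ / m - a m / m| ≤ C / m := by
      intro m
      rw [div_sub_div_same, abs_div, Nat.abs_cast]
      have h1 : |‖(⇑S)^[m] z - z‖ - a m| ≤ C := by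
        have := abs_norm_sub_norm_le ((⇑S)^[m] z - z) ((⇑T)^[m] z - z)
        have h2 : ((⇑S)^[m] z - z) - ((⇑T)^[m] z - z) = (⇑S)^[m] z - (⇑T)^[m] z := by abel
        rw [h2] at this
        refine this.trans ?_
        rw [norm_sub_rev]
        exact hbd m
      gcongr
    exact squeeze_zero_norm hb (tendsto_const_div_atTop_nhds_zero_nat C)
  have := key.add (hsub.tendsto_lim hbdd)
  rw [zero_add] at this
  refine this.congr fun m => by ring
end

section
/- Let V be a seminormed abelian group, T : V → V a norm non-increasing homomorphism, z ∈ V, and define L(T) = lim_{m→∞} ‖T^m(z) − z‖/m. Then for every k ∈ ℕ, L(T^k) = k · L(T), where L(T^k) = lim_{m→∞} ‖T^{km}(z) − z‖/m. -/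
open Filter Topology

/-- Homogeneity for positive powers: if `L(T) = lim ‖T^m z - z‖ / m`, then
`L(T^k) = lim ‖T^{km} z - z‖ / m = k · L(T)` for every `k : ℕ`. -/
theorem limit_of_power {V : Type*} [SeminormedAddCommGroup V]
    (T : V →+ V) (hT : ∀ v, ‖T v‖ ≤ ‖v‖) (z : V) (k : ℕ) (L : ℝ)
    (hL : Tendsto (fun m : ℕ => ‖(⇑T)^[m] z - z‖ / m) atTop (𝓝 L)) :
    Tendsto (fun m : ℕ => ‖(⇑T)^[k * m] z - z‖ / m) atTop (𝓝 (k * L)) := by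
  rcases Nat.eq_zero_or_pos k with hk | hk
  · subst hk
    simp only [Nat.zero_mul, Function.iterate_zero, id, sub_self, norm_zero,
      zero_div, Nat.cast_zero, zero_mul]
    exact tendsto_const_nhds
  · have hsub : Tendsto (fun m : ℕ => k * m) atTop atTop :=
      tendsto_atTop_atTop_of_monotone (fun a b h => Nat.mul_le_mul_left k h)
        (fun n => ⟨n, Nat.le_mul_of_pos_left n hk⟩)
    have h1 : Tendsto (fun m : ℕ => (k : ℝ) * (‖(⇑T)^[k * m] z - z‖ / (↑(k * m))))
        atTop (𝓝 (↑k * L)) := (hL.comp hsub).const_mul _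
    refine h1.congr' ?_
    filter_upwards [eventually_gt_atTop 0] with m hm
    have hk' : (k : ℝ) ≠ 0 := Nat.cast_ne_zero.mpr hk.ne'
    have hm' : (m : ℝ) ≠ 0 := Nat.cast_ne_zero.mpr hm.ne'
    push_cast
    field_simp
end

section
/- Let V be a seminormed abelian group, T, S : V → V norm non-increasing homomorphisms, and z ∈ V. Suppose there is C ≥ 0 such that ‖(TS)^m(z) − T^m(S^m(z))‖ ≤ C for all m ∈ ℕ. Then lim_{m→∞} ‖(TS)^m(z) − z‖/m ≤ lim_{m→∞} ‖T^m(z) − z‖/m + lim_{m→∞} ‖S^m(z) − z‖/m. -/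
open Filter Topology

section Aux

variable {V : Type*} [SeminormedAddCommGroup V]

lemma iter_norm_le (g : V →+ V) (hg : ∀ v, ‖g v‖ ≤ ‖v‖) (m : ℕ) (v : V) :
    ‖(⇑g)^[m] v‖ ≤ ‖v‖ := by
  induction m with
  | zero => simp
  | succ k ih =>
    rw [Function.iterate_succ_apply']
    exact (hg _).trans ih

lemma subadd_of_norm_le (g : V →+ V) (hg : ∀ v, ‖g v‖ ≤ ‖v‖) (z : V) :
    Subadditive (fun m => ‖(⇑g)^[m] z - z‖) := by
  intro m n
  have h1 : (⇑g)^[m + n] z = (⇑g)^[m] ((⇑g)^[n] z) := Function.iterate_add_apply _ _ _ _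
  calc ‖(⇑g)^[m + n] z - z‖ ≤ ‖(⇑g)^[m + n] z - (⇑g)^[m] z‖ + ‖(⇑g)^[m] z - z‖ :=
        norm_sub_le_norm_sub_add_norm_sub _ _ _
    _ ≤ ‖(⇑g)^[m] z - z‖ + ‖(⇑g)^[n] z - z‖ := by
        rw [add_comm]
        gcongr
        rw [h1, ← iterate_map_sub g]
        exact iter_norm_le g hg m _
    _ = _ := by rw [add_comm]

lemma bdd_below_aux (g : V →+ V) (z : V) :
    BddBelow (Set.range fun n : ℕ => ‖(⇑g)^[n] z - z‖ / n) := by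
  refine ⟨0, fun x hx => ?_⟩
  obtain ⟨n, rfl⟩ := hx
  positivity

end Aux

/-- Subadditivity for "commuting up to bounded error" maps: if
`‖(TS)^m z - T^m (S^m z)‖ ≤ C` for all `m`, then
`lim ‖(TS)^m z - z‖ / m ≤ lim ‖T^m z - z‖ / m + lim ‖S^m z - z‖ / m`. -/
theorem limit_subadditive_of_commuting {V : Type*} [SeminormedAddCommGroup V]
    (T S : V →+ V) (hT : ∀ v, ‖T v‖ ≤ ‖v‖) (hS : ∀ v, ‖S v‖ ≤ ‖v‖) (z : V)
    (C : ℝ) (hC : 0 ≤ C)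
    (hbd : ∀ m : ℕ, ‖(⇑T ∘ ⇑S)^[m] z - (⇑T)^[m] ((⇑S)^[m] z)‖ ≤ C) :
    ∃ L L₁ L₂ : ℝ,
      Tendsto (fun m : ℕ => ‖(⇑T ∘ ⇑S)^[m] z - z‖ / m) atTop (𝓝 L) ∧
      Tendsto (fun m : ℕ => ‖(⇑T)^[m] z - z‖ / m) atTop (𝓝 L₁) ∧
      Tendsto (fun m : ℕ => ‖(⇑S)^[m] z - z‖ / m) atTop (𝓝 L₂) ∧
      L ≤ L₁ + L₂ := by
  set F : V →+ V := T.comp S with hF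
  have hFc : (⇑F : V → V) = ⇑T ∘ ⇑S := rfl
  have hFn : ∀ v, ‖F v‖ ≤ ‖v‖ := fun v => (hT _).trans (hS v)
  have hsubF := subadd_of_norm_le F hFn z
  have hsubT := subadd_of_norm_le T hT z
  have hsubS := subadd_of_norm_le S hS z
  have htF := hsubF.tendsto_lim (bdd_below_aux F z)
  have htT := hsubT.tendsto_lim (bdd_below_aux T z)
  have htS := hsubS.tendsto_lim (bdd_below_aux S z)
  simp only [hFc] at htF
  refine ⟨_, _, _, htF, htT, htS, ?_⟩
  have keyn : ∀ m : ℕ, ‖(⇑T ∘ ⇑S)^[m] z - z‖ ≤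
      C + (‖(⇑T)^[m] z - z‖ + ‖(⇑S)^[m] z - z‖) := by
    intro m
    calc ‖(⇑T ∘ ⇑S)^[m] z - z‖
        ≤ ‖(⇑T ∘ ⇑S)^[m] z - (⇑T)^[m] ((⇑S)^[m] z)‖ + ‖(⇑T)^[m] ((⇑S)^[m] z) - z‖ :=
          norm_sub_le_norm_sub_add_norm_sub _ _ _
      _ ≤ C + ‖(⇑T)^[m] ((⇑S)^[m] z) - z‖ := by gcongr; exact hbd m
      _ ≤ C + (‖(⇑T)^[m] ((⇑S)^[m] z) - (⇑T)^[m] z‖ + ‖(⇑T)^[m] z - z‖) := by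
          gcongr; exact norm_sub_le_norm_sub_add_norm_sub _ _ _
      _ ≤ C + (‖(⇑S)^[m] z - z‖ + ‖(⇑T)^[m] z - z‖) := by
          gcongr
          rw [← iterate_map_sub T]
          exact iter_norm_le T hT m _
      _ = _ := by ring
  have key : ∀ m : ℕ, ‖(⇑T ∘ ⇑S)^[m] z - z‖ / m ≤
      (C + (‖(⇑T)^[m] z - z‖ + ‖(⇑S)^[m] z - z‖)) / m := by
    intro m
    rcases Nat.eq_zero_or_pos m with rfl | hm
    · simp
    · exact div_le_div_of_nonneg_right (keyn m) (Nat.cast_nonneg m)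
  have hrhs : Tendsto (fun m : ℕ => (C + (‖(⇑T)^[m] z - z‖ + ‖(⇑S)^[m] z - z‖)) / m)
      atTop (𝓝 (0 + (hsubT.lim + hsubS.lim))) := by
    have : ∀ m : ℕ, (C + (‖(⇑T)^[m] z - z‖ + ‖(⇑S)^[m] z - z‖)) / m
        = C / m + (‖(⇑T)^[m] z - z‖ / m + ‖(⇑S)^[m] z - z‖ / m) := fun m => by
      rw [add_div, add_div]
    simp only [this]
    exact (tendsto_const_div_atTop_nhds_zero_nat C).add (htT.add htS)
  have := le_of_tendsto_of_tendsto' htF hrhs key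
  linarith
end
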